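/- Coefficient relations implied by local asymptotic normality (marginal metamodel relations). Fix θ* ∈ ℝ^d, a positive definite d×d matrix K₂, and a bounded sequence (in probability) of random vectors S_n in ℝ^d. Suppose that for each n there are random coefficients a_n ∈ ℝ, b_n ∈ ℝ^d and random symmetric d×d matrices c_n such that μ(θ; Y_{1:n}) = a_n + b_nᵀθ + θᵀ c_n θ for all θ in a fixed open neighborhood of θ*, and suppose that for every bounded set B ⊆ ℝ^d containing 0, sup_{t∈B} | μ(θ* + t/√n; Y_{1:n}) − μ(θ*; Y_{1:n}) − S_nᵀ t + ½ tᵀ K₂ t | → 0 in probability as n → ∞. Then (1/n) c_n converges in probability to −½ K₂, and (1/√n)(b_n + 2 c_n θ*) − S_n converges in probability to 0. -/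

import Mathlib

open MeasureTheory Filter Matrix Real Topology

namespace MMCaux

variable {d : ℕ}

/-- The finite "test cube" `{-1,0,1}^d` used to extract coefficients. -/
def cube (d : ℕ) : Set (Fin d → ℝ) := {t | ∀ i, t i = -1 ∨ t i = 0 ∨ t i = 1}

lemma cube_finite : (cube d).Finite := by
  have : cube d ⊆ Set.pi Set.univ (fun _ : Fin d => ({-1, 0, 1} : Set ℝ)) := by
    intro t ht i _
    rcases ht i with h | h | h <;> simp [h]
  exact (Set.Finite.pi (fun _ => Set.toFinite _)).subset this

lemma zero_mem_cube : (0 : Fin d → ℝ) ∈ cube d := fun i => Or.inr (Or.inl rfl)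

lemma single_mem_cube (k : Fin d) : Pi.single k (1:ℝ) ∈ cube d := by
  intro i
  rcases eq_or_ne i k with h | h
  · subst h; simp
  · simp [Pi.single_apply, h]

lemma neg_mem_cube {t : Fin d → ℝ} (ht : t ∈ cube d) : -t ∈ cube d := by
  intro i
  rcases ht i with h | h | h <;> simp [h]

lemma add_single_mem_cube {k l : Fin d} (hkl : k ≠ l) :
    Pi.single k (1:ℝ) + Pi.single l 1 ∈ cube d := by
  intro i
  rcases eq_or_ne i k with h | h
  · subst h; simp [Pi.single_apply, hkl.symm]
  · rcases eq_or_ne i l with h2 | h2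
    · subst h2; simp [Pi.single_apply, h]
    · simp [Pi.single_apply, h, h2]

lemma norm_le_one_of_mem_cube {t : Fin d → ℝ} (ht : t ∈ cube d) : ‖t‖ ≤ 1 := by
  rw [pi_norm_le_iff_of_nonneg zero_le_one]
  intro i
  rcases ht i with h | h | h <;> simp [h]

lemma dot_mulVec_symm {A : Matrix (Fin d) (Fin d) ℝ} (h : A.IsSymm) (x y : Fin d → ℝ) :
    x ⬝ᵥ A *ᵥ y = y ⬝ᵥ A *ᵥ x := by
  rw [Matrix.dotProduct_mulVec, ← Matrix.mulVec_transpose, h.eq, dotProduct_comm]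

/-- Extraction of coefficient bounds from a uniform bound on the quadratic form
over the cube. -/
lemma coeff_bound (v : Fin d → ℝ) (M : Matrix (Fin d) (Fin d) ℝ)
    (hM : ∀ k l, M k l = M l k) (E : ℝ)
    (h : ∀ t ∈ cube d, |v ⬝ᵥ t + t ⬝ᵥ M *ᵥ t| ≤ E) :
    (∀ k l, |M k l| ≤ 2 * E) ∧ (∀ k, |v k| ≤ E) := by
  have hE0 : 0 ≤ E := by
    have := h 0 zero_mem_cube
    simpa using this
  have hdiag : ∀ k, |M k k| ≤ E ∧ |v k| ≤ E := by
    intro k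
    have h1 := h _ (single_mem_cube k)
    have h2 := h _ (neg_mem_cube (single_mem_cube k))
    simp only [Matrix.mulVec_single, MulOpposite.op_one, one_smul, Matrix.col_apply,
      dotProduct_single, single_dotProduct,
      dotProduct_neg, neg_dotProduct, Matrix.mulVec_neg, mul_one, one_mul] at h1 h2
    rw [abs_le] at h1 h2
    refine ⟨abs_le.mpr ⟨?_, ?_⟩, abs_le.mpr ⟨?_, ?_⟩⟩ <;> nlinarith [h1.1, h1.2, h2.1, h2.2]
  refine ⟨fun k l => ?_, fun k => (hdiag k).2⟩
  rcases eq_or_ne k l with rfl | hkl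
  · linarith [(hdiag k).1, abs_nonneg (M k k)]
  · have h1 := h _ (add_single_mem_cube hkl)
    have h2 := h _ (neg_mem_cube (add_single_mem_cube hkl))
    simp only [dotProduct_add, add_dotProduct, Matrix.mulVec_add, Matrix.mulVec_single,
      MulOpposite.op_one, one_smul, Matrix.col_apply, dotProduct_single, single_dotProduct, dotProduct_neg, neg_dotProduct,
      Matrix.mulVec_neg, mul_one, one_mul, Pi.add_apply] at h1 h2
    have hkk := ((hdiag k).1)
    have hll := ((hdiag l).1)
    have hsym := hM k l
    rw [abs_le] at h1 h2 hkk hll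
    rw [abs_le]
    constructor <;> nlinarith [h1.1, h1.2, h2.1, h2.2, hkk.1, hkk.2, hll.1, hll.2]

/-- Algebraic expansion of the LAN remainder for a quadratic log-likelihood. -/
lemma expand (b : Fin d → ℝ) (cM : Matrix (Fin d) (Fin d) ℝ) (hc : cM.IsSymm)
    (S θstar t : Fin d → ℝ) (K₂ : Matrix (Fin d) (Fin d) ℝ) (α : ℝ) :
    (b ⬝ᵥ (θstar + α • t) + (θstar + α • t) ⬝ᵥ cM *ᵥ (θstar + α • t))
      - (b ⬝ᵥ θstar + θstar ⬝ᵥ cM *ᵥ θstar) - S ⬝ᵥ t + (1/2) * (t ⬝ᵥ K₂ *ᵥ t)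
    = (fun k => α * (b k + 2 * (cM *ᵥ θstar) k) - S k) ⬝ᵥ t
      + t ⬝ᵥ ((α * α) • cM + (1/2 : ℝ) • K₂) *ᵥ t := by
  have hv : (fun k => α * (b k + 2 * (cM *ᵥ θstar) k) - S k)
      = α • b + (2*α) • (cM *ᵥ θstar) - S := by
    funext k; simp [Pi.smul_apply]; ring
  have hcross : θstar ⬝ᵥ cM *ᵥ t = t ⬝ᵥ cM *ᵥ θstar := dot_mulVec_symm hc _ _
  have hcomm : (cM *ᵥ θstar) ⬝ᵥ t = t ⬝ᵥ (cM *ᵥ θstar) := dotProduct_comm _ _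
  rw [hv]
  simp only [dotProduct_add, add_dotProduct, sub_dotProduct, smul_dotProduct,
    Matrix.mulVec_add, Matrix.mulVec_smul, Matrix.add_mulVec, Matrix.smul_mulVec,
    dotProduct_smul, smul_eq_mul, hcross, hcomm]
  ring

lemma le_biSup_of_finite {α : Type*} {B : Set α} (hB : B.Finite) (f : α → ℝ) {t : α}
    (ht : t ∈ B) : |f t| ≤ ⨆ s ∈ B, |f s| := by
  set h : α → ℝ := fun s => ⨆ _ : s ∈ B, |f s| with hh
  have hbdd : BddAbove (Set.range h) := by
    apply Set.Finite.bddAbove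
    apply ((hB.image h).insert 0).subset
    rintro _ ⟨s, rfl⟩
    by_cases hs : s ∈ B
    · exact Set.mem_insert_of_mem _ ⟨s, hs, rfl⟩
    · left
      have : IsEmpty (s ∈ B) := by simpa using hs
      simp only [hh]
      rw [Real.iSup_of_isEmpty]
  calc |f t| = h t := by simp only [hh]; rw [ciSup_pos ht]
    _ ≤ ⨆ s, h s := le_ciSup hbdd t

end MMCaux

open MMCaux

/-- **Coefficient relations implied by local asymptotic normality (marginal metamodel
relations).**  If `μ(θ; Y_{1:n}) = a_n + b_nᵀθ + θᵀc_nθ` on a fixed open neighborhood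
of `θ*` for random coefficients `(a_n, b_n, c_n)` with `c_n` symmetric, `S_n` is
bounded in probability, and the LAN expansion
`sup_{t∈B} |μ(θ* + t/√n; Y) − μ(θ*; Y) − S_nᵀt + ½tᵀK₂t| → 0` in probability holds for
every bounded `B ∋ 0`, then `n⁻¹ c_n → −½K₂` and `n^{−1/2}(b_n + 2c_nθ*) − S_n → 0`
in probability. -/
theorem marginal_metamodel_coefficients {Ω : Type*} [MeasurableSpace Ω]
    (P : Measure Ω) [IsProbabilityMeasure P] {d : ℕ}
    (μ : ℕ → (Fin d → ℝ) → Ω → ℝ)   -- μ n θ ω = μ(θ; Y_{1:n}(ω))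
    (θstar : Fin d → ℝ)
    (K₂ : Matrix (Fin d) (Fin d) ℝ) (hK₂ : K₂.PosDef)
    (S : ℕ → Ω → Fin d → ℝ)
    (a : ℕ → Ω → ℝ) (b : ℕ → Ω → Fin d → ℝ)
    (c : ℕ → Ω → Matrix (Fin d) (Fin d) ℝ)
    (hsymm : ∀ n ω, (c n ω).IsSymm)
    -- quadratic form of μ on a fixed open neighborhood of θ*
    (U : Set (Fin d → ℝ)) (hU : IsOpen U) (hθU : θstar ∈ U)
    (hquad : ∀ n ω, ∀ θ ∈ U,
      μ n θ ω = a n ω + dotProduct (b n ω) θ + dotProduct θ ((c n ω).mulVec θ))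
    -- S_n is bounded in probability
    (htight : ∀ ε : ℝ, 0 < ε → ∃ R : ℝ, ∀ n : ℕ,
      P {ω | R < ‖S n ω‖} < ENNReal.ofReal ε)
    -- the LAN expansion
    (hlan : ∀ B : Set (Fin d → ℝ), Bornology.IsBounded B → (0 : Fin d → ℝ) ∈ B →
      TendstoInMeasure P
        (fun (n : ℕ) ω => ⨆ t ∈ B,
          |μ n (θstar + (Real.sqrt n)⁻¹ • t) ω - μ n θstar ω -
            dotProduct (S n ω) t + (1 / 2) * dotProduct t (K₂.mulVec t)|)
        atTop (fun _ => 0)) :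
    (∀ k l, TendstoInMeasure P (fun (n : ℕ) ω => (n : ℝ)⁻¹ * c n ω k l)
        atTop (fun _ => -(1 / 2) * K₂ k l)) ∧
      (∀ k, TendstoInMeasure P
        (fun (n : ℕ) ω =>
          (Real.sqrt n)⁻¹ * (b n ω k + 2 * (c n ω).mulVec θstar k) - S n ω k)
        atTop (fun _ => 0)) := by
  classical
  -- the supremum process over the cube
  set F : ℕ → Ω → ℝ := fun n ω => ⨆ t ∈ cube d,
      |μ n (θstar + (Real.sqrt n)⁻¹ • t) ω - μ n θstar ω -
        dotProduct (S n ω) t + (1 / 2) * dotProduct t (K₂.mulVec t)| with hF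
  have hlanB : TendstoInMeasure P F atTop (fun _ => 0) :=
    hlan (cube d) cube_finite.isBounded zero_mem_cube
  -- choose δ with ball ⊆ U and a threshold N₀
  obtain ⟨δ, hδpos, hball⟩ := Metric.isOpen_iff.mp hU θstar hθU
  set N₀ : ℕ := ⌈δ⁻¹ ^ 2⌉₊ + 1 with hN₀
  -- coefficient processes
  set v : ℕ → Ω → Fin d → ℝ := fun n ω k =>
    (Real.sqrt n)⁻¹ * (b n ω k + 2 * (c n ω).mulVec θstar k) - S n ω k with hv
  set M : ℕ → Ω → Matrix (Fin d) (Fin d) ℝ := fun n ω =>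
    ((n : ℝ)⁻¹) • c n ω + (1/2 : ℝ) • K₂ with hM
  have hK2symm : ∀ k l, K₂ k l = K₂ l k := by
    intro k l
    have := congrFun (congrFun hK₂.1 k) l
    rw [Matrix.conjTranspose_apply, star_trivial] at this
    exact this.symm
  have hMsymm : ∀ n ω k l, M n ω k l = M n ω l k := by
    intro n ω k l
    have hc := (hsymm n ω).apply k l
    simp only [hM, Matrix.add_apply, Matrix.smul_apply, smul_eq_mul]
    rw [hc, hK2symm k l]
  -- the key pointwise bound for n ≥ N₀
  have key : ∀ n, N₀ ≤ n → ∀ ω, ∀ t ∈ cube d,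
      |v n ω ⬝ᵥ t + t ⬝ᵥ M n ω *ᵥ t| ≤ F n ω := by
    intro n hn ω t ht
    have hn1 : 1 ≤ n := le_trans (by omega) hn
    have hnR : (δ⁻¹)^2 < (n : ℝ) := by
      calc (δ⁻¹)^2 ≤ (⌈δ⁻¹ ^ 2⌉₊ : ℝ) := Nat.le_ceil _
        _ < (N₀ : ℝ) := by rw [hN₀]; push_cast; linarith
        _ ≤ (n : ℝ) := by exact_mod_cast hn
    have hsqrt : δ⁻¹ < Real.sqrt n := by
      rw [show δ⁻¹ = Real.sqrt ((δ⁻¹)^2) from (Real.sqrt_sq (by positivity)).symm]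
      exact Real.sqrt_lt_sqrt (by positivity) hnR
    have hsqrtpos : 0 < Real.sqrt n := lt_trans (by positivity) hsqrt
    have hinv : (Real.sqrt n)⁻¹ < δ := by
      rw [inv_lt_comm₀ hsqrtpos hδpos] at *
      · exact hsqrt
    have hmem : θstar + (Real.sqrt n)⁻¹ • t ∈ U := by
      apply hball
      rw [Metric.mem_ball, dist_eq_norm]
      have : θstar + (Real.sqrt n)⁻¹ • t - θstar = (Real.sqrt n)⁻¹ • t := by abel
      rw [this, norm_smul, norm_inv, Real.norm_eq_abs,
        abs_of_nonneg (Real.sqrt_nonneg _)]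
      calc (Real.sqrt n)⁻¹ * ‖t‖ ≤ (Real.sqrt n)⁻¹ * 1 := by
            exact mul_le_mul_of_nonneg_left (norm_le_one_of_mem_cube ht)
              (inv_nonneg.mpr (Real.sqrt_nonneg _))
        _ = (Real.sqrt n)⁻¹ := mul_one _
        _ < δ := hinv
    have hα : (Real.sqrt n)⁻¹ * (Real.sqrt n)⁻¹ = (n : ℝ)⁻¹ := by
      rw [← mul_inv, Real.mul_self_sqrt (Nat.cast_nonneg n)]
    have heq : μ n (θstar + (Real.sqrt n)⁻¹ • t) ω - μ n θstar ω -
        dotProduct (S n ω) t + (1 / 2) * dotProduct t (K₂.mulVec t)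
        = v n ω ⬝ᵥ t + t ⬝ᵥ M n ω *ᵥ t := by
      rw [hquad n ω _ hmem, hquad n ω θstar hθU]
      have := expand (b n ω) (c n ω) (hsymm n ω) (S n ω) θstar t K₂ (Real.sqrt n)⁻¹
      rw [hα] at this
      calc a n ω + b n ω ⬝ᵥ (θstar + (Real.sqrt n)⁻¹ • t) +
            (θstar + (Real.sqrt n)⁻¹ • t) ⬝ᵥ c n ω *ᵥ (θstar + (Real.sqrt n)⁻¹ • t) -
            (a n ω + b n ω ⬝ᵥ θstar + θstar ⬝ᵥ c n ω *ᵥ θstar) -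
            S n ω ⬝ᵥ t + 1 / 2 * (t ⬝ᵥ K₂ *ᵥ t)
          = (b n ω ⬝ᵥ (θstar + (Real.sqrt n)⁻¹ • t) +
            (θstar + (Real.sqrt n)⁻¹ • t) ⬝ᵥ c n ω *ᵥ (θstar + (Real.sqrt n)⁻¹ • t)) -
            (b n ω ⬝ᵥ θstar + θstar ⬝ᵥ c n ω *ᵥ θstar) -
            S n ω ⬝ᵥ t + 1 / 2 * (t ⬝ᵥ K₂ *ᵥ t) := by ring
        _ = v n ω ⬝ᵥ t + t ⬝ᵥ M n ω *ᵥ t := this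
    rw [← heq]
    simp only [hF]
    exact le_biSup_of_finite cube_finite
      (fun t => μ n (θstar + (Real.sqrt n)⁻¹ • t) ω - μ n θstar ω -
        dotProduct (S n ω) t + (1 / 2) * dotProduct t (K₂.mulVec t)) ht
  -- the squeeze lemma
  have squeeze : ∀ f : ℕ → Ω → ℝ, (∀ n, N₀ ≤ n → ∀ ω, |f n ω| ≤ 2 * F n ω) →
      ∀ ε : ℝ, 0 < ε →
      Tendsto (fun n => P {ω | ε ≤ |f n ω|}) atTop (𝓝 0) := by
    intro f hf ε hε
    have hF2 := tendstoInMeasure_iff_dist.mp hlanB (ε/2) (by positivity)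
    refine tendsto_of_tendsto_of_tendsto_of_le_of_le' tendsto_const_nhds hF2
      (Eventually.of_forall fun n => zero_le) ?_
    filter_upwards [eventually_ge_atTop N₀] with n hn
    apply measure_mono
    intro ω hω
    simp only [Set.mem_setOf_eq] at hω ⊢
    have h1 := hf n hn ω
    rw [Real.dist_eq, sub_zero]
    have h2 : ε / 2 ≤ F n ω := by linarith [abs_nonneg (f n ω)]
    linarith [le_abs_self (F n ω)]
  constructor
  · intro k l
    rw [tendstoInMeasure_iff_dist]
    intro ε hε
    have hbound : ∀ n, N₀ ≤ n → ∀ ω,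
        |(n : ℝ)⁻¹ * c n ω k l + (1/2) * K₂ k l| ≤ 2 * F n ω := by
      intro n hn ω
      have := (coeff_bound (v n ω) (M n ω) (hMsymm n ω) (F n ω) (key n hn ω)).1 k l
      simpa only [hM, Matrix.add_apply, Matrix.smul_apply, smul_eq_mul] using this
    have := squeeze (fun n ω => (n : ℝ)⁻¹ * c n ω k l + (1/2) * K₂ k l) hbound ε hε
    convert this using 2 with n
    congr 1
    ext ω
    simp only [Set.mem_setOf_eq, Real.dist_eq]
    rw [show (n:ℝ)⁻¹ * c n ω k l - (-(1/2) * K₂ k l)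
        = (n:ℝ)⁻¹ * c n ω k l + 1/2 * K₂ k l from by ring]
  · intro k
    rw [tendstoInMeasure_iff_dist]
    intro ε hε
    have hbound : ∀ n, N₀ ≤ n → ∀ ω,
        |(Real.sqrt n)⁻¹ * (b n ω k + 2 * (c n ω).mulVec θstar k) - S n ω k|
          ≤ 2 * F n ω := by
      intro n hn ω
      have h0 : (0:ℝ) ≤ F n ω := by
        have := key n hn ω 0 zero_mem_cube
        simpa using le_trans (abs_nonneg _) this
      have := (coeff_bound (v n ω) (M n ω) (hMsymm n ω) (F n ω) (key n hn ω)).2 k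
      simp only [hv] at this
      linarith
    have := squeeze (fun n ω =>
      (Real.sqrt n)⁻¹ * (b n ω k + 2 * (c n ω).mulVec θstar k) - S n ω k) hbound ε hε
    convert this using 2 with n
    congr 1
    ext ω
    simp only [Set.mem_setOf_eq, Real.dist_eq, sub_zero]
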